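/- Under a completely randomized assignment with r ≥ 2 replications, for every nonempty subset A ⊆ {1,…,K} the Neymanian variance estimator V̂_A = (1/(2^{2(K−1)} r)) Σ_z s²(z) satisfies E[V̂_A] = Var(τ̂_A) + (1/N) S_A²; in particular E[V̂_A] ≥ Var(τ̂_A), so the Neymanian estimator is in expectation an upper bound on the true sampling variance of τ̂_A. -/

import Mathlib

open Finset

noncomputable section

/-- A treatment combination in a 2^K factorial design: each of the K factors
is at its low level (`false`, coded −1) or high level (`true`, coded +1). -/
abbrev Combo (K : ℕ) := Fin K → Bool

/-- The completely randomized assignments: each of the 2^K treatment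
combinations receives exactly `r` of the `N` units. -/
def Assignments (K N r : ℕ) : Finset (Fin N → Combo K) :=
  Finset.univ.filter (fun ω => ∀ z : Combo K, (Finset.univ.filter (fun i => ω i = z)).card = r)

/-- Expectation over the uniform distribution on completely randomized assignments. -/
def expect (K N r : ℕ) (f : (Fin N → Combo K) → ℝ) : ℝ :=
  (∑ ω ∈ Assignments K N r, f ω) / ((Assignments K N r).card : ℝ)

/-- Variance over the uniform distribution on completely randomized assignments. -/
def variance (K N r : ℕ) (f : (Fin N → Combo K) → ℝ) : ℝ :=
  expect K N r (fun ω => (f ω - expect K N r f) ^ 2)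

/-- Covariance over the uniform distribution on completely randomized assignments. -/
def covariance (K N r : ℕ) (f g : (Fin N → Combo K) → ℝ) : ℝ :=
  expect K N r (fun ω => (f ω - expect K N r f) * (g ω - expect K N r g))

/-- The assignment indicator W_i(z). -/
def Wvar (K N : ℕ) (ω : Fin N → Combo K) (i : Fin N) (z : Combo K) : ℝ :=
  if ω i = z then 1 else 0

/-- The population mean Ȳ(z) of the potential outcomes under z. -/
def Ybar (K N : ℕ) (Y : Fin N → Combo K → ℝ) (z : Combo K) : ℝ :=
  (∑ i, Y i z) / (N : ℝ)

/-- The observed treatment mean Ȳ^obs(z) = (1/r) Σ_{i : W_i(z)=1} Y_i(z). -/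
def YbarObs (K N r : ℕ) (Y : Fin N → Combo K → ℝ)
    (ω : Fin N → Combo K) (z : Combo K) : ℝ :=
  (∑ i, if ω i = z then Y i z else 0) / (r : ℝ)

/-- Finite-population variance S²(z) (divisor N−1). -/
def Ssq (K N : ℕ) (Y : Fin N → Combo K → ℝ) (z : Combo K) : ℝ :=
  (∑ i, (Y i z - Ybar K N Y z) ^ 2) / ((N : ℝ) - 1)

/-- Finite-population covariance S²(z, z*) (divisor N−1). -/
def Scov (K N : ℕ) (Y : Fin N → Combo K → ℝ) (z zs : Combo K) : ℝ :=
  (∑ i, (Y i z - Ybar K N Y z) * (Y i zs - Ybar K N Y zs)) / ((N : ℝ) - 1)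

/-- The contrast g_A(z) = Π_{k ∈ A} z_k ∈ {−1, +1}. -/
def gA (K : ℕ) (A : Finset (Fin K)) (z : Combo K) : ℝ :=
  ∏ k ∈ A, (if z k then (1 : ℝ) else -1)

/-- The unit-level factorial effect τ_{iA} = 2^{−(K−1)} Σ_z g_A(z) Y_i(z). -/
def tauUnit (K N : ℕ) (Y : Fin N → Combo K → ℝ) (A : Finset (Fin K)) (i : Fin N) : ℝ :=
  (∑ z : Combo K, gA K A z * Y i z) / (2 : ℝ) ^ (K - 1)

/-- The population-level factorial effect τ̄_A = (1/N) Σ_i τ_{iA}. -/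
def tauBar (K N : ℕ) (Y : Fin N → Combo K → ℝ) (A : Finset (Fin K)) : ℝ :=
  (∑ i, tauUnit K N Y A i) / (N : ℝ)

/-- The estimated factorial effect τ̂_A = 2^{−(K−1)} Σ_z g_A(z) Ȳ^obs(z). -/
def tauHat (K N r : ℕ) (Y : Fin N → Combo K → ℝ) (A : Finset (Fin K))
    (ω : Fin N → Combo K) : ℝ :=
  (∑ z : Combo K, gA K A z * YbarObs K N r Y ω z) / (2 : ℝ) ^ (K - 1)

/-- The finite-population variance S_A² of the unit-level factorial effects. -/
def SsqA (K N : ℕ) (Y : Fin N → Combo K → ℝ) (A : Finset (Fin K)) : ℝ :=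
  (∑ i, (tauUnit K N Y A i - tauBar K N Y A) ^ 2) / ((N : ℝ) - 1)

/-- Strict additivity: unit-level differences of potential outcomes between any
two treatment combinations are constant across units. -/
def StrictAdditivity (K N : ℕ) (Y : Fin N → Combo K → ℝ) : Prop :=
  ∀ z zs : Combo K, ∀ i i' : Fin N, Y i z - Y i zs = Y i' z - Y i' zs

/-- Compound symmetry: common variance S² > 0 and common correlation ρ,
i.e. S²(z) = S² for all z and S²(z,z*) = ρ S² for all z ≠ z*. -/
def CompoundSymmetry (K N : ℕ) (Y : Fin N → Combo K → ℝ) (S2 ρ : ℝ) : Prop :=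
  0 < S2 ∧ (∀ z : Combo K, Ssq K N Y z = S2) ∧
    ∀ z zs : Combo K, z ≠ zs → Scov K N Y z zs = ρ * S2

/-- The sample variance s²(z) of the observed outcomes in treatment group z. -/
def sampleVar (K N r : ℕ) (Y : Fin N → Combo K → ℝ)
    (ω : Fin N → Combo K) (z : Combo K) : ℝ :=
  (∑ i, if ω i = z then (Y i z - YbarObs K N r Y ω z) ^ 2 else 0) / ((r : ℝ) - 1)

/-- The Neymanian variance estimator V̂_A = (1/(2^{2(K−1)} r)) Σ_z s²(z). -/
def VhatNey (K N r : ℕ) (Y : Fin N → Combo K → ℝ) (ω : Fin N → Combo K) : ℝ :=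
  (∑ z : Combo K, sampleVar K N r Y ω z) / ((2 : ℝ) ^ (2 * (K - 1)) * (r : ℝ))

section Aux

variable {K N r : ℕ}

lemma mem_assignments {ω : Fin N → Combo K} :
    ω ∈ Assignments K N r ↔ ∀ z : Combo K, (univ.filter fun i => ω i = z).card = r := by
  simp [Assignments]

lemma comp_mem_assignments (σ : Equiv.Perm (Fin N)) {ω : Fin N → Combo K}
    (hω : ω ∈ Assignments K N r) : (ω ∘ σ) ∈ Assignments K N r := by
  rw [mem_assignments] at hω ⊢
  intro z
  rw [← hω z]
  apply Finset.card_nbij' (⇑σ) (⇑σ.symm) <;> intro x hx <;> simp_all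

lemma sum_comp_perm (σ : Equiv.Perm (Fin N)) (F : (Fin N → Combo K) → ℝ) :
    ∑ ω ∈ Assignments K N r, F (ω ∘ σ) = ∑ ω ∈ Assignments K N r, F ω := by
  apply Finset.sum_nbij' (fun ω => ω ∘ ⇑σ) (fun ω => ω ∘ ⇑σ.symm)
  · intro ω hω; exact comp_mem_assignments σ hω
  · intro ω hω; exact comp_mem_assignments σ.symm hω
  · intro ω _; funext i; simp
  · intro ω _; funext i; simp
  · intro ω _; rfl

lemma assignments_nonempty (hN : N = r * 2 ^ K) (hr : 1 ≤ r) :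
    (Assignments K N r).Nonempty := by
  have hr0 : 0 < r := hr
  have e : Combo K ≃ Fin (2 ^ K) := Fintype.equivFinOfCardEq (by simp [Combo])
  have hb : ∀ i : Fin N, i.val / r < 2 ^ K := fun i =>
    (Nat.div_lt_iff_lt_mul hr0).2 (by rw [Nat.mul_comm]; exact hN ▸ i.isLt)
  refine ⟨fun i => e.symm ⟨i.val / r, hb i⟩, ?_⟩
  rw [mem_assignments]
  intro z
  set m := (e z).val with hm
  have hmlt : m < 2 ^ K := (e z).isLt
  have key : ∀ i : Fin N, (e.symm ⟨i.val / r, hb i⟩ = z) ↔ (m * r ≤ i.val ∧ i.val < m * r + r) := by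
    intro i
    rw [Equiv.symm_apply_eq, Fin.ext_iff]
    simp only [← hm]
    constructor
    · intro h
      refine ⟨(Nat.le_div_iff_mul_le hr0).1 (le_of_eq h.symm), ?_⟩
      have h2 : i.val / r < m + 1 := by omega
      have := (Nat.div_lt_iff_lt_mul hr0).1 h2
      rw [Nat.succ_mul] at this
      omega
    · rintro ⟨h1, h2⟩
      exact Nat.div_eq_of_lt_le h1 (by rw [Nat.succ_mul]; omega)
  have hNr : N = 2 ^ K * r := by rw [hN, Nat.mul_comm]
  have hsub : ∀ j : Fin r, m * r + j.val < N := by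
    intro j
    have h1 : (m + 1) * r ≤ 2 ^ K * r := Nat.mul_le_mul_right r hmlt
    rw [Nat.succ_mul] at h1
    omega
  have : (univ.filter fun i : Fin N => e.symm ⟨i.val / r, hb i⟩ = z).card
      = (univ : Finset (Fin r)).card := by
    refine Finset.card_bij' (fun i hi => (⟨i.val - m * r, by
        have h := (key i).1 (mem_filter.1 hi).2; omega⟩ : Fin r))
      (fun j _ => (⟨m * r + j.val, hsub j⟩ : Fin N)) (fun a _ => mem_univ _) ?_ ?_ ?_
    · intro b _
      have hb' := b.isLt
      refine mem_filter.2 ⟨mem_univ _, (key ⟨m * r + b.val, hsub b⟩).2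
        ⟨by show m * r ≤ m * r + b.val; omega, by show m * r + b.val < m * r + r; omega⟩⟩
    · intro a ha
      have h := (key a).1 (mem_filter.1 ha).2
      exact Fin.ext (by simp only []; omega)
    · intro b _
      exact Fin.ext (by simp only []; omega)
  rw [this, Finset.card_univ, Fintype.card_fin]

end Aux

section Moments

variable {K N r : ℕ}

lemma sum_ind_eq (i i' : Fin N) (z : Combo K) :
    ∑ ω ∈ Assignments K N r, (if ω i = z then (1:ℝ) else 0)
      = ∑ ω ∈ Assignments K N r, (if ω i' = z then (1:ℝ) else 0) := by
  have h := sum_comp_perm (K := K) (r := r) (Equiv.swap i i')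
    (fun ω => if ω i' = z then (1:ℝ) else 0)
  simpa [Function.comp, Equiv.swap_apply_right] using h

lemma E1val (i : Fin N) (z : Combo K) :
    (N : ℝ) * ∑ ω ∈ Assignments K N r, (if ω i = z then (1:ℝ) else 0)
      = (r : ℝ) * ((Assignments K N r).card : ℝ) := by
  have h2 : ∑ i' : Fin N, ∑ ω ∈ Assignments K N r, (if ω i' = z then (1:ℝ) else 0)
      = (N : ℝ) * ∑ ω ∈ Assignments K N r, (if ω i = z then (1:ℝ) else 0) := by
    rw [Finset.sum_congr rfl (fun i' _ => sum_ind_eq i' i z), Finset.sum_const, card_univ,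
      Fintype.card_fin, nsmul_eq_mul]
  rw [← h2, Finset.sum_comm]
  rw [Finset.sum_congr rfl (fun ω hω => ?_), Finset.sum_const, nsmul_eq_mul, mul_comm]
  rw [Finset.sum_boole, mem_assignments.1 hω z]

lemma sum_ind2_eq (i j j' : Fin N) (hj : j ≠ i) (hj' : j' ≠ i) (z z' : Combo K) :
    ∑ ω ∈ Assignments K N r, (if ω i = z then (1:ℝ) else 0) * (if ω j = z' then 1 else 0)
      = ∑ ω ∈ Assignments K N r,
          (if ω i = z then (1:ℝ) else 0) * (if ω j' = z' then 1 else 0) := by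
  have h := sum_comp_perm (K := K) (r := r) (Equiv.swap j j')
    (fun ω => (if ω i = z then (1:ℝ) else 0) * (if ω j' = z' then 1 else 0))
  simpa [Function.comp, Equiv.swap_apply_right,
    Equiv.swap_apply_of_ne_of_ne hj.symm hj'.symm] using h

lemma E2val (hr : 1 ≤ r) (i j : Fin N) (hij : j ≠ i) (z z' : Combo K) :
    ((N : ℝ) - 1) * ∑ ω ∈ Assignments K N r,
        (if ω i = z then (1:ℝ) else 0) * (if ω j = z' then 1 else 0)
      = (if z = z' then (r : ℝ) - 1 else (r : ℝ))
          * ∑ ω ∈ Assignments K N r, (if ω i = z then (1:ℝ) else 0) := by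
  have hN1 : 1 ≤ N := i.pos
  have h2 : ∑ j' ∈ univ.erase i, ∑ ω ∈ Assignments K N r,
        (if ω i = z then (1:ℝ) else 0) * (if ω j' = z' then 1 else 0)
      = ((N : ℝ) - 1) * ∑ ω ∈ Assignments K N r,
        (if ω i = z then (1:ℝ) else 0) * (if ω j = z' then 1 else 0) := by
    rw [Finset.sum_congr rfl (fun j' hj' =>
        sum_ind2_eq i j' j (Finset.ne_of_mem_erase hj') hij z z'),
      Finset.sum_const, Finset.card_erase_of_mem (mem_univ i), card_univ, Fintype.card_fin,
      nsmul_eq_mul, Nat.cast_sub hN1, Nat.cast_one]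
  rw [← h2, Finset.sum_comm, Finset.mul_sum]
  apply Finset.sum_congr rfl
  intro ω hω
  rw [← Finset.mul_sum, mul_comm ((if z = z' then (r : ℝ) - 1 else (r : ℝ)))]
  by_cases h : ω i = z
  · simp only [h, if_pos rfl, one_mul]
    have hb : ∑ j' ∈ univ.erase i, (if ω j' = z' then (1:ℝ) else 0)
        = (((univ.filter fun x => ω x = z').erase i).card : ℝ) := by
      rw [Finset.sum_boole]
      congr 1
      rw [Finset.filter_erase]
    rw [hb]
    by_cases hzz : z = z'
    · subst hzz
      rw [if_pos rfl, Finset.card_erase_of_mem (mem_filter.2 ⟨mem_univ i, h⟩),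
        mem_assignments.1 hω z, Nat.cast_sub hr, Nat.cast_one]
    · rw [if_neg hzz,
        Finset.erase_eq_of_notMem (a := i) (s := univ.filter fun x => ω x = z')
          (fun hmem => hzz (h.symm.trans (mem_filter.1 hmem).2)),
        mem_assignments.1 hω z']
  · simp [h]

end Moments

section Helpers

variable {K N r : ℕ}

lemma ite_one_mul' {P : Prop} [Decidable P] (a : ℝ) :
    (if P then a else 0) = (if P then (1:ℝ) else 0) * a := by
  split <;> simp

lemma sum_sq_dev {n : ℕ} (f : Fin n → ℝ) (hn : (n:ℝ) ≠ 0) :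
    ∑ i, (f i - (∑ j, f j) / (n:ℝ)) ^ 2 = ∑ i, f i ^ 2 - (∑ i, f i) ^ 2 / (n:ℝ) := by
  have h : ∀ i : Fin n, (f i - (∑ j, f j)/(n:ℝ))^2
      = f i^2 - (2 * ((∑ j, f j)/(n:ℝ))) * f i + ((∑ j, f j)/(n:ℝ))^2 := fun i => by ring
  rw [Finset.sum_congr rfl (fun i _ => h i), Finset.sum_add_distrib, Finset.sum_sub_distrib,
    ← Finset.mul_sum, Finset.sum_const, card_univ, Fintype.card_fin, nsmul_eq_mul]
  field_simp
  ring

lemma sum_offdiag {n : ℕ} (f g : Fin n → ℝ) :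
    ∑ i, ∑ j ∈ univ.erase i, f i * g j = (∑ i, f i) * (∑ i, g i) - ∑ i, f i * g i := by
  have h : ∀ i : Fin n, ∑ j ∈ univ.erase i, f i * g j = f i * (∑ j, g j) - f i * g i := by
    intro i
    rw [← Finset.mul_sum, Finset.sum_erase_eq_sub (mem_univ i), mul_sub]
  rw [Finset.sum_congr rfl (fun i _ => h i), Finset.sum_sub_distrib, ← Finset.sum_mul]

lemma gA_mul_self (A : Finset (Fin K)) (z : Combo K) : gA K A z * gA K A z = 1 := by
  unfold gA
  rw [← Finset.prod_mul_distrib]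
  apply Finset.prod_eq_one
  intro k _
  split <;> norm_num

lemma N_facts (hN : N = r * 2 ^ K) (hr : 2 ≤ r) :
    (0:ℝ) < (N:ℝ) ∧ (1:ℝ) < (N:ℝ) ∧ (r:ℝ) ≠ 0 ∧ (r:ℝ) - 1 ≠ 0 ∧ ((N:ℝ)) ≠ 0
      ∧ (N:ℝ) - 1 ≠ 0 := by
  have h1 : 2 ≤ N := by
    have : 1 ≤ 2 ^ K := Nat.one_le_two_pow
    calc 2 ≤ r * 1 := by omega
    _ ≤ r * 2 ^ K := Nat.mul_le_mul_left r this
    _ = N := hN.symm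
  have h2 : (2:ℝ) ≤ (N:ℝ) := by exact_mod_cast h1
  have h3 : (2:ℝ) ≤ (r:ℝ) := by exact_mod_cast hr
  refine ⟨by linarith, by linarith, by linarith, by linarith, by linarith, by linarith⟩

lemma E1div (hN : N = r * 2 ^ K) (hr : 2 ≤ r) (i : Fin N) (z : Combo K) :
    ∑ ω ∈ Assignments K N r, (if ω i = z then (1:ℝ) else 0)
      = (r:ℝ) * ((Assignments K N r).card : ℝ) / (N:ℝ) := by
  obtain ⟨-, -, -, -, hN0, -⟩ := N_facts hN hr
  rw [eq_div_iff hN0, mul_comm _ (N:ℝ), E1val i z]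

lemma E2div (hN : N = r * 2 ^ K) (hr : 2 ≤ r) (i j : Fin N) (hij : j ≠ i) (z z' : Combo K) :
    ∑ ω ∈ Assignments K N r, (if ω i = z then (1:ℝ) else 0) * (if ω j = z' then 1 else 0)
      = (if z = z' then (r:ℝ) - 1 else (r:ℝ))
          * ((r:ℝ) * ((Assignments K N r).card : ℝ) / (N:ℝ)) / ((N:ℝ) - 1) := by
  obtain ⟨-, -, -, -, -, hN1⟩ := N_facts hN hr
  rw [eq_div_iff hN1, mul_comm _ ((N:ℝ) - 1), E2val (by omega) i j hij z z',
    E1div hN hr i z]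

lemma diag_moment (hN : N = r * 2 ^ K) (hr : 2 ≤ r) (i : Fin N) (z z' : Combo K) :
    ∑ ω ∈ Assignments K N r, (if ω i = z then (1:ℝ) else 0) * (if ω i = z' then 1 else 0)
      = if z = z' then (r:ℝ) * ((Assignments K N r).card : ℝ) / (N:ℝ) else 0 := by
  by_cases hzz : z = z'
  · subst hzz
    rw [if_pos rfl, ← E1div hN hr i z]
    apply Finset.sum_congr rfl
    intro ω _
    by_cases h : ω i = z <;> simp [h]
  · rw [if_neg hzz]
    apply Finset.sum_eq_zero
    intro ω _
    by_cases h : ω i = z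
    · have : ω i ≠ z' := h ▸ fun hc => hzz (h ▸ hc)
      simp [this]
    · simp [h]

lemma pair_moment (hN : N = r * 2 ^ K) (hr : 2 ≤ r) (z z' : Combo K) (f g : Fin N → ℝ) :
    ∑ ω ∈ Assignments K N r,
        (∑ i, (if ω i = z then (1:ℝ) else 0) * f i)
          * (∑ j, (if ω j = z' then (1:ℝ) else 0) * g j)
      = ((r:ℝ) * ((Assignments K N r).card : ℝ) / (N:ℝ))
          * ((if z = z' then ∑ i, f i * g i else 0)
            + ((if z = z' then (r:ℝ) - 1 else (r:ℝ)) / ((N:ℝ) - 1))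
              * ∑ i, ∑ j ∈ univ.erase i, f i * g j) := by
  have step1 : ∀ ω : Fin N → Combo K,
      (∑ i, (if ω i = z then (1:ℝ) else 0) * f i)
          * (∑ j, (if ω j = z' then (1:ℝ) else 0) * g j)
        = ∑ i, ∑ j, ((if ω i = z then (1:ℝ) else 0) * (if ω j = z' then 1 else 0))
            * (f i * g j) := by
    intro ω
    rw [Finset.sum_mul_sum]
    exact Finset.sum_congr rfl fun i _ => Finset.sum_congr rfl fun j _ => by ring
  rw [Finset.sum_congr rfl fun ω _ => step1 ω]
  rw [Finset.sum_comm]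
  have step2 : ∀ i : Fin N,
      (∑ ω ∈ Assignments K N r, ∑ j, ((if ω i = z then (1:ℝ) else 0)
          * (if ω j = z' then 1 else 0)) * (f i * g j))
        = ∑ j, (∑ ω ∈ Assignments K N r, (if ω i = z then (1:ℝ) else 0)
            * (if ω j = z' then 1 else 0)) * (f i * g j) := by
    intro i
    rw [Finset.sum_comm]
    exact Finset.sum_congr rfl fun j _ => by rw [Finset.sum_mul]
  rw [Finset.sum_congr rfl fun i _ => step2 i]
  have step3 : ∀ i : Fin N,
      (∑ j, (∑ ω ∈ Assignments K N r, (if ω i = z then (1:ℝ) else 0)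
          * (if ω j = z' then 1 else 0)) * (f i * g j))
        = (if z = z' then (r:ℝ) * ((Assignments K N r).card : ℝ) / (N:ℝ) else 0)
            * (f i * g i)
          + ((if z = z' then (r:ℝ) - 1 else (r:ℝ))
              * ((r:ℝ) * ((Assignments K N r).card : ℝ) / (N:ℝ)) / ((N:ℝ) - 1))
            * ∑ j ∈ univ.erase i, f i * g j := by
    intro i
    rw [← Finset.add_sum_erase _ _ (mem_univ i), diag_moment hN hr i z z', Finset.mul_sum]
    congr 1
    exact Finset.sum_congr rfl fun j hj =>
      by rw [E2div hN hr i j (Finset.ne_of_mem_erase hj) z z']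
  rw [Finset.sum_congr rfl fun i _ => step3 i, Finset.sum_add_distrib, ← Finset.mul_sum,
    ← Finset.mul_sum]
  by_cases hzz : z = z' <;> simp only [hzz, if_pos rfl, if_neg, reduceIte] <;> ring

end Helpers

section Main

variable {K N r : ℕ}

lemma sum_sq_dev' {α : Type*} (s : Finset α) (f : α → ℝ) (h : ((s.card):ℝ) ≠ 0) :
    ∑ x ∈ s, (f x - (∑ y ∈ s, f y) / (s.card:ℝ)) ^ 2
      = ∑ x ∈ s, f x ^ 2 - (∑ x ∈ s, f x) ^ 2 / (s.card:ℝ) := by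
  have hh : ∀ x ∈ s, (f x - (∑ y ∈ s, f y)/(s.card:ℝ))^2
      = f x^2 - (2 * ((∑ y ∈ s, f y)/(s.card:ℝ))) * f x + ((∑ y ∈ s, f y)/(s.card:ℝ))^2 :=
    fun x _ => by ring
  rw [Finset.sum_congr rfl hh, Finset.sum_add_distrib, Finset.sum_sub_distrib,
    ← Finset.mul_sum, Finset.sum_const, nsmul_eq_mul]
  field_simp
  ring

lemma sum_sampleVar (hN : N = r * 2 ^ K) (hr : 2 ≤ r) (Y : Fin N → Combo K → ℝ) (z : Combo K) :
    ∑ ω ∈ Assignments K N r, sampleVar K N r Y ω z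
      = ((Assignments K N r).card : ℝ) * Ssq K N Y z := by
  obtain ⟨hN0', hN1', hr0, hr1, hN0, hN1⟩ := N_facts hN hr
  have step1 : ∀ ω ∈ Assignments K N r, sampleVar K N r Y ω z
      = ((∑ i, (if ω i = z then (1:ℝ) else 0) * (Y i z)^2)
          - (∑ i, (if ω i = z then (1:ℝ) else 0) * Y i z)^2 / (r:ℝ)) / ((r:ℝ) - 1) := by
    intro ω hω
    have hcard : (∑ i, if ω i = z then (1:ℝ) else 0) = (r:ℝ) := by
      rw [Finset.sum_boole, mem_assignments.1 hω z]
    unfold sampleVar YbarObs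
    congr 1
    have hS : (∑ i, if ω i = z then Y i z else 0)
        = ∑ i, (if ω i = z then (1:ℝ) else 0) * Y i z :=
      Finset.sum_congr rfl fun i _ => ite_one_mul' _
    rw [hS]
    set S := ∑ i, (if ω i = z then (1:ℝ) else 0) * Y i z with hSdef
    have expand : ∀ i : Fin N, (if ω i = z then (Y i z - S / (r:ℝ))^2 else 0)
        = (if ω i = z then (1:ℝ) else 0) * (Y i z)^2
          - (2 * (S/(r:ℝ))) * ((if ω i = z then (1:ℝ) else 0) * Y i z)
          + (S/(r:ℝ))^2 * (if ω i = z then (1:ℝ) else 0) := by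
      intro i; by_cases h : ω i = z <;> simp [h] <;> ring
    rw [Finset.sum_congr rfl fun i _ => expand i, Finset.sum_add_distrib,
      Finset.sum_sub_distrib, ← Finset.mul_sum, ← Finset.mul_sum, ← hSdef, hcard]
    field_simp
    ring
  rw [Finset.sum_congr rfl step1, ← Finset.sum_div, Finset.sum_sub_distrib, ← Finset.sum_div]
  set c := ((Assignments K N r).card : ℝ) with hcdef
  have hA : ∑ ω ∈ Assignments K N r, ∑ i, (if ω i = z then (1:ℝ) else 0) * (Y i z)^2
      = ((r:ℝ) * c / N) * ∑ i, (Y i z)^2 := by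
    rw [Finset.sum_comm, Finset.mul_sum]
    exact Finset.sum_congr rfl fun i _ => by rw [← Finset.sum_mul, E1div hN hr i z]
  have hB : ∑ ω ∈ Assignments K N r, (∑ i, (if ω i = z then (1:ℝ) else 0) * Y i z)^2
      = ((r:ℝ) * c / N) * ((∑ i, Y i z * Y i z)
          + (((r:ℝ)-1)/((N:ℝ)-1)) * ((∑ i, Y i z) * (∑ i, Y i z) - ∑ i, Y i z * Y i z)) := by
    have hpm := pair_moment hN hr z z (fun i => Y i z) (fun i => Y i z)
    rw [sum_offdiag] at hpm
    simp only [if_pos rfl] at hpm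
    rw [Finset.sum_congr rfl fun (ω : Fin N → Combo K) _ =>
      (sq (∑ i, (if ω i = z then (1:ℝ) else 0) * Y i z) ▸ rfl :
        (∑ i, (if ω i = z then (1:ℝ) else 0) * Y i z)^2
          = (∑ i, (if ω i = z then (1:ℝ) else 0) * Y i z)
            * (∑ i, (if ω i = z then (1:ℝ) else 0) * Y i z))]
    exact hpm
  rw [hA, hB]
  have hYY : (∑ i, Y i z * Y i z) = ∑ i, (Y i z)^2 :=
    Finset.sum_congr rfl fun i _ => (sq (Y i z)).symm
  rw [hYY]
  unfold Ssq Ybar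
  rw [sum_sq_dev (fun i => Y i z) hN0]
  field_simp
  ring

lemma tauHat_eq (Y : Fin N → Combo K → ℝ) (A : Finset (Fin K)) (ω : Fin N → Combo K) :
    tauHat K N r Y A ω
      = (∑ z, gA K A z * ∑ i, (if ω i = z then (1:ℝ) else 0) * Y i z)
          / ((2:ℝ)^(K-1) * (r:ℝ)) := by
  unfold tauHat YbarObs
  have h1 : ∀ z : Combo K, gA K A z * ((∑ i, if ω i = z then Y i z else 0) / (r:ℝ))
      = gA K A z * (∑ i, (if ω i = z then (1:ℝ) else 0) * Y i z) / (r:ℝ) := by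
    intro z
    rw [Finset.sum_congr rfl fun i _ => ite_one_mul' (Y i z), mul_div_assoc]
  rw [Finset.sum_congr rfl fun z _ => h1 z, ← Finset.sum_div, div_div, mul_comm (r:ℝ)]

lemma sum_tauHat (hN : N = r * 2 ^ K) (hr : 2 ≤ r) (Y : Fin N → Combo K → ℝ)
    (A : Finset (Fin K)) :
    ∑ ω ∈ Assignments K N r, tauHat K N r Y A ω
      = ((Assignments K N r).card : ℝ) * tauBar K N Y A := by
  obtain ⟨hN0', hN1', hr0, hr1, hN0, hN1⟩ := N_facts hN hr
  set c := ((Assignments K N r).card : ℝ) with hcdef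
  rw [Finset.sum_congr rfl fun ω _ => tauHat_eq Y A ω, ← Finset.sum_div, Finset.sum_comm]
  have h2 : ∀ z : Combo K,
      ∑ ω ∈ Assignments K N r, gA K A z * ∑ i, (if ω i = z then (1:ℝ) else 0) * Y i z
        = gA K A z * (((r:ℝ) * c / N) * ∑ i, Y i z) := by
    intro z
    rw [← Finset.mul_sum]
    congr 1
    rw [Finset.sum_comm, Finset.mul_sum]
    exact Finset.sum_congr rfl fun i _ => by rw [← Finset.sum_mul, E1div hN hr i z]
  rw [Finset.sum_congr rfl fun z _ => h2 z]
  have hswap : ∑ z, gA K A z * ∑ i, Y i z = ∑ i, ∑ z, gA K A z * Y i z := by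
    rw [Finset.sum_congr rfl fun (z : Combo K) _ =>
      (Finset.mul_sum univ (fun i => Y i z) (gA K A z) : _)]
    exact Finset.sum_comm
  have hL : ∑ z, gA K A z * (((r:ℝ) * c / N) * ∑ i, Y i z)
      = ((r:ℝ) * c / N) * ∑ i, ∑ z, gA K A z * Y i z := by
    rw [← hswap, Finset.mul_sum]
    exact Finset.sum_congr rfl fun z _ => by ring
  rw [hL]
  unfold tauBar tauUnit
  rw [← Finset.sum_div]
  have hb : ((2:ℝ)^(K-1)) ≠ 0 := by positivity
  field_simp

lemma sum_tauHat_sq (hN : N = r * 2 ^ K) (hr : 2 ≤ r) (Y : Fin N → Combo K → ℝ)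
    (A : Finset (Fin K)) :
    ∑ ω ∈ Assignments K N r, (tauHat K N r Y A ω)^2
      = ((Assignments K N r).card : ℝ) *
          ((∑ z, ∑ i, (Y i z)^2) / (((2:ℝ)^(K-1))^2 * (r:ℝ) * (N:ℝ))
            + ((∑ i, tauUnit K N Y A i)^2 - ∑ i, (tauUnit K N Y A i)^2)
                / ((N:ℝ) * ((N:ℝ) - 1))
            - ((∑ z, (∑ i, Y i z)^2) - ∑ z, ∑ i, (Y i z)^2)
                / (((2:ℝ)^(K-1))^2 * (r:ℝ) * (N:ℝ) * ((N:ℝ) - 1))) := by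
  obtain ⟨hN0', hN1', hr0, hr1, hN0, hN1⟩ := N_facts hN hr
  set c := ((Assignments K N r).card : ℝ) with hcdef
  set b := (2:ℝ)^(K-1) with hbdef
  have hb : b ≠ 0 := by positivity
  -- step 1 : rewrite the summand
  have step1 : ∀ ω ∈ Assignments K N r, (tauHat K N r Y A ω)^2
      = (∑ z, ∑ z', (gA K A z * gA K A z')
          * ((∑ i, (if ω i = z then (1:ℝ) else 0) * Y i z)
            * (∑ j, (if ω j = z' then (1:ℝ) else 0) * Y j z'))) / (b * r)^2 := by
    intro ω _
    rw [tauHat_eq Y A ω, div_pow, sq (∑ z, gA K A z * ∑ i, (if ω i = z then (1:ℝ) else 0) * Y i z),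
      Finset.sum_mul_sum]
    congr 1
    exact Finset.sum_congr rfl fun z _ => Finset.sum_congr rfl fun z' _ => by ring
  rw [Finset.sum_congr rfl step1, ← Finset.sum_div, Finset.sum_comm]
  -- step 2 : pull the ω-sum inside and evaluate it by pair_moment
  have step2 : ∀ z : Combo K,
      ∑ ω ∈ Assignments K N r, ∑ z', (gA K A z * gA K A z')
          * ((∑ i, (if ω i = z then (1:ℝ) else 0) * Y i z)
            * (∑ j, (if ω j = z' then (1:ℝ) else 0) * Y j z'))
        = ∑ z', (gA K A z * gA K A z')
            * (((r:ℝ) * c / N) * ((if z = z' then ∑ i, Y i z * Y i z' else 0)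
              + ((if z = z' then (r:ℝ) - 1 else (r:ℝ)) / ((N:ℝ) - 1))
                * ∑ i, ∑ j ∈ univ.erase i, Y i z * Y j z')) := by
    intro z
    rw [Finset.sum_comm]
    refine Finset.sum_congr rfl fun z' _ => ?_
    rw [← Finset.mul_sum, pair_moment hN hr z z' (fun i => Y i z) (fun j => Y j z')]
  rw [Finset.sum_congr rfl fun z _ => step2 z]
  -- step 3 : simplify the (z,z') summand, splitting the diagonal
  have step3 : ∀ z z' : Combo K, (gA K A z * gA K A z')
          * (((r:ℝ) * c / N) * ((if z = z' then ∑ i, Y i z * Y i z' else 0)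
              + ((if z = z' then (r:ℝ) - 1 else (r:ℝ)) / ((N:ℝ) - 1))
                * ∑ i, ∑ j ∈ univ.erase i, Y i z * Y j z'))
      = ((r:ℝ) * c / N) * ((if z = z' then ∑ i, Y i z * Y i z else 0)
          + ((r:ℝ) / ((N:ℝ) - 1)) * ((gA K A z * gA K A z')
              * ((∑ i, Y i z) * (∑ i, Y i z') - ∑ i, Y i z * Y i z'))
          - (1 / ((N:ℝ) - 1))
              * (if z = z' then (∑ i, Y i z) * (∑ i, Y i z) - ∑ i, Y i z * Y i z else 0)) := by
    intro z z'
    rw [sum_offdiag (fun i => Y i z) (fun j => Y j z')]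
    by_cases h : z = z'
    · subst h
      simp only [eq_self_iff_true, if_true]
      rw [gA_mul_self]
      ring
    · simp only [if_neg h]
      ring
  rw [Finset.sum_congr rfl fun z _ => Finset.sum_congr rfl fun z' _ => step3 z z']
  -- step 4 : evaluate the double sums of the three pieces
  have hdiag1 : ∀ z : Combo K, ∑ z' : Combo K,
      (if z = z' then ∑ i, Y i z * Y i z else (0:ℝ)) = ∑ i, (Y i z)^2 := by
    intro z
    rw [Finset.sum_ite_eq univ z (fun _ => ∑ i, Y i z * Y i z), if_pos (mem_univ z)]
    exact Finset.sum_congr rfl fun i _ => (sq (Y i z)).symm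
  have hdiag2 : ∀ z : Combo K, ∑ z' : Combo K,
      (if z = z' then (∑ i, Y i z) * (∑ i, Y i z) - ∑ i, Y i z * Y i z else (0:ℝ))
        = (∑ i, Y i z)^2 - ∑ i, (Y i z)^2 := by
    intro z
    rw [Finset.sum_ite_eq univ z
      (fun _ => (∑ i, Y i z) * (∑ i, Y i z) - ∑ i, Y i z * Y i z), if_pos (mem_univ z)]
    rw [← sq]
    congr 1
    exact Finset.sum_congr rfl fun i _ => (sq (Y i z)).symm
  -- the cross part
  have hunit : ∀ i : Fin N, ∑ z, gA K A z * Y i z = b * tauUnit K N Y A i := by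
    intro i
    unfold tauUnit
    rw [hbdef, mul_div_cancel₀]
    positivity
  have hcross : ∑ z, ∑ z', (gA K A z * gA K A z')
        * ((∑ i, Y i z) * (∑ i, Y i z') - ∑ i, Y i z * Y i z')
      = b^2 * ((∑ i, tauUnit K N Y A i)^2 - ∑ i, (tauUnit K N Y A i)^2) := by
    have e1 : ∀ z z' : Combo K, (gA K A z * gA K A z')
          * ((∑ i, Y i z) * (∑ i, Y i z') - ∑ i, Y i z * Y i z')
        = (gA K A z * ∑ i, Y i z) * (gA K A z' * ∑ i, Y i z')
          - ∑ i, (gA K A z * Y i z) * (gA K A z' * Y i z') := by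
      intro z z'
      have h2 : ∑ i, (gA K A z * Y i z) * (gA K A z' * Y i z')
          = (gA K A z * gA K A z') * ∑ i, Y i z * Y i z' := by
        rw [Finset.mul_sum]
        exact Finset.sum_congr rfl fun i _ => by ring
      rw [h2]
      ring
    rw [Finset.sum_congr rfl fun z _ => Finset.sum_congr rfl fun z' _ => e1 z z',
      Finset.sum_congr rfl fun (z : Combo K) _ => Finset.sum_sub_distrib _ _,
      Finset.sum_sub_distrib]
    have e2 : ∑ z, ∑ z', (gA K A z * ∑ i, Y i z) * (gA K A z' * ∑ i, Y i z')
        = (b * ∑ i, tauUnit K N Y A i)^2 := by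
      rw [← Finset.sum_mul_sum]
      have e3 : ∑ z, gA K A z * ∑ i, Y i z = b * ∑ i, tauUnit K N Y A i := by
        have hswap : ∑ z, gA K A z * ∑ i, Y i z = ∑ i, ∑ z, gA K A z * Y i z := by
          rw [Finset.sum_congr rfl fun (z : Combo K) _ =>
            (Finset.mul_sum univ (fun i => Y i z) (gA K A z) : _)]
          exact Finset.sum_comm
        rw [hswap, Finset.sum_congr rfl fun i _ => hunit i, ← Finset.mul_sum]
      rw [e3, sq]
    have e4 : ∑ z, ∑ z', ∑ i, (gA K A z * Y i z) * (gA K A z' * Y i z')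
        = b^2 * ∑ i, (tauUnit K N Y A i)^2 := by
      have sw1 : ∀ z : Combo K, ∑ z', ∑ i, (gA K A z * Y i z) * (gA K A z' * Y i z')
          = ∑ i, ∑ z', (gA K A z * Y i z) * (gA K A z' * Y i z') := fun z => Finset.sum_comm
      rw [Finset.sum_congr rfl fun z _ => sw1 z, Finset.sum_comm]
      have e5 : ∀ i : Fin N, ∑ z, ∑ z', (gA K A z * Y i z) * (gA K A z' * Y i z')
          = b^2 * (tauUnit K N Y A i)^2 := by
        intro i
        rw [← Finset.sum_mul_sum, hunit i, ← sq, mul_pow]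
      rw [Finset.sum_congr rfl fun i _ => e5 i, ← Finset.mul_sum]
    rw [e2, e4, mul_pow]
    ring
  have comb : ∀ z z' : Combo K, ((r:ℝ) * c / N) * ((if z = z' then ∑ i, Y i z * Y i z else 0)
          + ((r:ℝ) / ((N:ℝ) - 1)) * ((gA K A z * gA K A z')
              * ((∑ i, Y i z) * (∑ i, Y i z') - ∑ i, Y i z * Y i z'))
          - (1 / ((N:ℝ) - 1))
              * (if z = z' then (∑ i, Y i z) * (∑ i, Y i z) - ∑ i, Y i z * Y i z else 0))
      = ((r:ℝ) * c / N) * (if z = z' then ∑ i, Y i z * Y i z else 0)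
        + ((r:ℝ) * c / N * ((r:ℝ) / ((N:ℝ) - 1))) * ((gA K A z * gA K A z')
              * ((∑ i, Y i z) * (∑ i, Y i z') - ∑ i, Y i z * Y i z'))
        - ((r:ℝ) * c / N * (1 / ((N:ℝ) - 1)))
              * (if z = z' then (∑ i, Y i z) * (∑ i, Y i z) - ∑ i, Y i z * Y i z else 0) :=
    fun z z' => by ring
  rw [Finset.sum_congr rfl fun z _ => Finset.sum_congr rfl fun z' _ => comb z z']
  simp only [Finset.sum_add_distrib, Finset.sum_sub_distrib, ← Finset.mul_sum]
  rw [Finset.sum_congr rfl fun z _ => hdiag1 z, Finset.sum_congr rfl fun z _ => hdiag2 z, hcross]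
  rw [Finset.sum_sub_distrib]
  field_simp

lemma variance_eq (h : ((Assignments K N r).card : ℝ) ≠ 0) (f : (Fin N → Combo K) → ℝ) :
    variance K N r f = expect K N r (fun ω => (f ω)^2) - (expect K N r f)^2 := by
  unfold _root_.variance _root_.expect
  rw [sum_sq_dev' _ f h]
  field_simp

lemma Ssq_eq (hN0 : ((N:ℝ)) ≠ 0) (Y : Fin N → Combo K → ℝ) (z : Combo K) :
    Ssq K N Y z = ((∑ i, (Y i z)^2) - (∑ i, Y i z)^2 / (N:ℝ)) / ((N:ℝ) - 1) := by
  unfold Ssq Ybar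
  rw [sum_sq_dev (fun i => Y i z) hN0]

lemma SsqA_eq (hN0 : ((N:ℝ)) ≠ 0) (Y : Fin N → Combo K → ℝ) (A : Finset (Fin K)) :
    SsqA K N Y A = ((∑ i, (tauUnit K N Y A i)^2)
      - (∑ i, tauUnit K N Y A i)^2 / (N:ℝ)) / ((N:ℝ) - 1) := by
  unfold SsqA tauBar
  rw [sum_sq_dev (fun i => tauUnit K N Y A i) hN0]

end Main

/-- For r ≥ 2 and every nonempty A,
E[V̂_A] = Var(τ̂_A) + (1/N) S_A²; in particular E[V̂_A] ≥ Var(τ̂_A). -/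
theorem VhatNey_upper_bound (K N r : ℕ) (hK : 1 ≤ K) (hr : 2 ≤ r) (hN : N = r * 2 ^ K)
    (Y : Fin N → Combo K → ℝ) (A : Finset (Fin K)) (hA : A.Nonempty) :
    expect K N r (VhatNey K N r Y) =
        variance K N r (tauHat K N r Y A) + (1 / (N : ℝ)) * SsqA K N Y A ∧
      variance K N r (tauHat K N r Y A) ≤ expect K N r (VhatNey K N r Y) := by
  obtain ⟨hN0', hN1', hr0, hr1, hN0, hN1⟩ := N_facts hN hr
  have hne := assignments_nonempty hN (by omega)
  have hc0 : ((Assignments K N r).card : ℝ) ≠ 0 :=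
    Nat.cast_ne_zero.2 (Finset.card_pos.2 hne).ne'
  have hb : ((2:ℝ)^(K-1)) ≠ 0 := by positivity
  have hpow : (2:ℝ)^(2*(K-1)) = ((2:ℝ)^(K-1))^2 := by rw [mul_comm, pow_mul]
  have hEV : _root_.expect K N r (VhatNey K N r Y)
      = (∑ z, Ssq K N Y z) / (((2:ℝ)^(K-1))^2 * (r:ℝ)) := by
    unfold _root_.expect VhatNey
    rw [← Finset.sum_div, Finset.sum_comm,
      Finset.sum_congr rfl fun z _ => sum_sampleVar hN hr Y z, ← Finset.mul_sum, hpow]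
    field_simp
  have hET : _root_.expect K N r (tauHat K N r Y A) = tauBar K N Y A := by
    unfold _root_.expect
    rw [sum_tauHat hN hr Y A, mul_comm, mul_div_assoc, div_self hc0, mul_one]
  have hET2 : _root_.expect K N r (fun ω => (tauHat K N r Y A ω)^2)
      = (∑ z, ∑ i, (Y i z)^2) / (((2:ℝ)^(K-1))^2 * (r:ℝ) * (N:ℝ))
          + ((∑ i, tauUnit K N Y A i)^2 - ∑ i, (tauUnit K N Y A i)^2)
              / ((N:ℝ) * ((N:ℝ) - 1))
          - ((∑ z, (∑ i, Y i z)^2) - ∑ z, ∑ i, (Y i z)^2)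
              / (((2:ℝ)^(K-1))^2 * (r:ℝ) * (N:ℝ) * ((N:ℝ) - 1)) := by
    unfold _root_.expect
    rw [sum_tauHat_sq hN hr Y A, mul_comm, mul_div_assoc, div_self hc0, mul_one]
  have hvar : _root_.variance K N r (tauHat K N r Y A)
      = (∑ z, ∑ i, (Y i z)^2) / (((2:ℝ)^(K-1))^2 * (r:ℝ) * (N:ℝ))
          + ((∑ i, tauUnit K N Y A i)^2 - ∑ i, (tauUnit K N Y A i)^2)
              / ((N:ℝ) * ((N:ℝ) - 1))
          - ((∑ z, (∑ i, Y i z)^2) - ∑ z, ∑ i, (Y i z)^2)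
              / (((2:ℝ)^(K-1))^2 * (r:ℝ) * (N:ℝ) * ((N:ℝ) - 1))
          - (tauBar K N Y A)^2 := by
    rw [variance_eq hc0, hET2, hET]
  have hSsum : ∑ z, Ssq K N Y z
      = ((∑ z, ∑ i, (Y i z)^2) - (∑ z, (∑ i, Y i z)^2) / (N:ℝ)) / ((N:ℝ) - 1) := by
    rw [Finset.sum_congr rfl fun z _ => Ssq_eq hN0 Y z, ← Finset.sum_div,
      Finset.sum_sub_distrib, ← Finset.sum_div]
  have htb : tauBar K N Y A = (∑ i, tauUnit K N Y A i) / (N:ℝ) := rfl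
  have main : _root_.expect K N r (VhatNey K N r Y) =
      _root_.variance K N r (tauHat K N r Y A) + (1 / (N : ℝ)) * SsqA K N Y A := by
    rw [hEV, hvar, hSsum, SsqA_eq hN0 Y A, htb]
    field_simp
    ring
  refine ⟨main, ?_⟩
  have hpos : 0 ≤ (1 / (N:ℝ)) * SsqA K N Y A := by
    apply mul_nonneg (by positivity)
    unfold SsqA
    apply div_nonneg (Finset.sum_nonneg fun i _ => sq_nonneg _) (by linarith)
  linarith [main]
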